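/- Let f(x) ∈ ℚ[x] be a polynomial of degree d such that f(n) ∈ ℤ for all n ∈ ℤ. Then there exist unique integers m_0, m_1, …, m_d such that f(x) = Σ_{i=0}^{d} ( binom(x+i, i+1) − binom(x+i−m_i, i+1) ), where binom(y, j) denotes the binomial coefficient polynomial y(y−1)⋯(y−j+1)/j!. -/

import Mathlib

open Polynomial

/-- A polynomial `f ∈ ℚ[x]` is a *Hilbert polynomial* if there exist a field `k`,
a standard graded `k`-algebra `R` (a commutative `ℕ`-graded `k`-algebra with
finite-dimensional graded pieces, generated as a `k`-algebra by its degree-one part)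
and an `N₀` such that `dim_k R_i = f(i)` for all `i ≥ N₀`. -/
def IsHilbertPolynomial (f : Polynomial ℚ) : Prop :=
  ∃ (k : Type) (R : Type) (_ : Field k) (_ : CommRing R) (_ : Algebra k R)
    (𝒜 : ℕ → Submodule k R) (_ : GradedAlgebra 𝒜),
    (∀ i : ℕ, FiniteDimensional k (𝒜 i)) ∧
    Algebra.adjoin k ((𝒜 1 : Submodule k R) : Set R) = ⊤ ∧
    ∃ N₀ : ℕ, ∀ i : ℕ, N₀ ≤ i → (Module.finrank k (𝒜 i) : ℚ) = f.eval (i : ℚ)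

/-- The binomial coefficient polynomial `binom(y, j) = y(y-1)⋯(y-j+1)/j!` in `ℚ[x]`. -/
noncomputable def binomPoly (j : ℕ) : Polynomial ℚ :=
  Polynomial.C ((j.factorial : ℚ)⁻¹) * descPochhammer ℚ j

lemma binomPoly_natDegree (j : ℕ) : (binomPoly j).natDegree = j := by
  rw [binomPoly, natDegree_C_mul (by positivity), descPochhammer_natDegree]

lemma binomPoly_coeff_self (j : ℕ) : (binomPoly j).coeff j = (j.factorial : ℚ)⁻¹ := by
  rw [binomPoly, coeff_C_mul]
  have := (monic_descPochhammer ℚ j).leadingCoeff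
  rw [leadingCoeff, descPochhammer_natDegree] at this
  rw [this, mul_one]

lemma binomPoly_coeff_gt {j k : ℕ} (h : j < k) : (binomPoly j).coeff k = 0 :=
  coeff_eq_zero_of_natDegree_lt (by rwa [binomPoly_natDegree])

lemma binomPoly_int (j : ℕ) (z : ℤ) :
    (binomPoly j).eval (z : ℚ) = ((Ring.choose z j : ℤ) : ℚ) := by
  have h1 : (descPochhammer ℚ j).eval (z : ℚ) = (((descPochhammer ℤ j).eval z : ℤ) : ℚ) :=
    (descPochhammer_eval_cast ℚ j z).symm
  have h2 : (descPochhammer ℤ j).eval z = j.factorial • Ring.choose z j := by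
    rw [eval_eq_smeval]; exact Ring.descPochhammer_eq_factorial_smul_choose z j
  rw [binomPoly, eval_mul, eval_C, h1, h2]
  have : (j.factorial : ℚ) ≠ 0 := by positivity
  field_simp
  simp [nsmul_eq_mul]

noncomputable def mterm (i : ℕ) (m : ℤ) : Polynomial ℚ :=
  (binomPoly (i + 1)).comp (X + C (i : ℚ)) -
    (binomPoly (i + 1)).comp (X + C (i : ℚ) - C (m : ℚ))

lemma eval_sub_eval_of_natDegree_le_one {q : Polynomial ℚ} (hq : q.natDegree ≤ 1) (a b : ℚ) :
    q.eval a - q.eval b = q.coeff 1 * (a - b) := by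
  conv_lhs => rw [eq_X_add_C_of_natDegree_le_one hq]
  simp only [eval_add, eval_mul, eval_C, eval_X]
  ring

lemma mterm_coeff {i k : ℕ} (m : ℤ) (hk : i ≤ k) :
    (mterm i m).coeff k =
      if k = i then (m : ℚ) * ((i.factorial : ℚ)⁻¹) else 0 := by
  have hc : X + C ((i : ℚ)) - C ((m : ℚ)) = X + C ((i : ℚ) - (m : ℚ)) := by
    rw [C_sub]; ring
  have hndp : (binomPoly (i + 1)).natDegree = i + 1 := binomPoly_natDegree (i + 1)
  have hq : (hasseDeriv k (binomPoly (i + 1))).natDegree ≤ 1 := by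
    rw [natDegree_hasseDeriv, hndp]; omega
  rw [mterm, hc, coeff_sub, ← taylor_apply, ← taylor_apply, taylor_coeff, taylor_coeff,
    eval_sub_eval_of_natDegree_le_one hq, hasseDeriv_coeff]
  rcases eq_or_lt_of_le hk with h | h
  · subst h
    rw [if_pos rfl]
    have h3 : (1 : ℕ) + i = i + 1 := by omega
    rw [h3, binomPoly_coeff_self]
    have h1 : (i + 1).choose i = i + 1 := Nat.choose_succ_self_right i
    have h2 : ((i + 1).factorial : ℚ) = (i + 1) * i.factorial := by
      rw [Nat.factorial_succ]; push_cast; ring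
    rw [h1, h2]
    have hk0 : (i.factorial : ℚ) ≠ 0 := by positivity
    field_simp
    push_cast
    ring
  · rw [if_neg (by omega), binomPoly_coeff_gt (by omega), mul_zero, zero_mul]

lemma mterm_natDegree (i : ℕ) (m : ℤ) : (mterm i m).natDegree ≤ i := by
  rw [natDegree_le_iff_coeff_eq_zero]
  intro N hN
  rw [mterm_coeff m (le_of_lt hN), if_neg (by omega)]

lemma mterm_intval (i : ℕ) (m : ℤ) (n : ℤ) : ∃ z : ℤ, (mterm i m).eval (n : ℚ) = (z : ℚ) := by
  refine ⟨Ring.choose (n + i) (i + 1) - Ring.choose (n + i - m) (i + 1), ?_⟩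
  have h1 : ((n : ℚ)) + (i : ℚ) = (((n + i : ℤ)) : ℚ) := by push_cast; ring
  have h2 : ((n : ℚ)) + (i : ℚ) - (m : ℚ) = (((n + i - m : ℤ)) : ℚ) := by push_cast; ring
  rw [mterm, eval_sub, eval_comp, eval_comp]
  simp only [eval_add, eval_sub, eval_X, eval_C]
  rw [h2, h1, binomPoly_int, binomPoly_int]
  push_cast
  ring

lemma key_int : ∀ e : ℕ, ∀ g : Polynomial ℚ, g.natDegree ≤ e →
    (∀ n : ℤ, ∃ z : ℤ, g.eval (n : ℚ) = (z : ℚ)) →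
    ∃ z : ℤ, g.coeff e * (e.factorial : ℚ) = (z : ℚ) := by
  intro e
  induction e with
  | zero =>
    intro g hg hint
    obtain ⟨z, hz⟩ := hint 0
    refine ⟨z, ?_⟩
    rw [coeff_zero_eq_eval_zero]
    simpa using hz
  | succ e ih =>
    intro g hg hint
    set Δ : Polynomial ℚ := taylor 1 g - g with hΔ
    have hΔint : ∀ n : ℤ, ∃ z : ℤ, Δ.eval (n : ℚ) = (z : ℚ) := by
      intro n
      obtain ⟨z1, hz1⟩ := hint (n + 1)
      obtain ⟨z2, hz2⟩ := hint n
      refine ⟨z1 - z2, ?_⟩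
      rw [hΔ, eval_sub, taylor_apply, eval_comp]
      simp only [eval_add, eval_X, eval_C]
      push_cast at hz1 ⊢
      rw [hz1, hz2]
    have hΔdeg : Δ.natDegree ≤ e := by
      rw [natDegree_le_iff_coeff_eq_zero]
      intro N hN
      have hN' : e + 1 ≤ N := hN
      have hdq : (hasseDeriv N g).natDegree ≤ 0 := by
        rw [natDegree_hasseDeriv]; omega
      rw [hΔ, coeff_sub, taylor_coeff]
      rw [eq_C_of_natDegree_le_zero hdq, eval_C, hasseDeriv_coeff, Nat.zero_add,
        Nat.choose_self, Nat.cast_one, one_mul, sub_self]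
    have hcoeff : Δ.coeff e = (e + 1 : ℚ) * g.coeff (e + 1) := by
      have hdq : (hasseDeriv e g).natDegree ≤ 1 := by
        rw [natDegree_hasseDeriv]; omega
      rw [hΔ, coeff_sub, taylor_coeff]
      conv_lhs => rw [eq_X_add_C_of_natDegree_le_one hdq]
      rw [hasseDeriv_coeff, hasseDeriv_coeff]
      simp only [eval_add, eval_mul, eval_C, eval_X, Nat.zero_add, Nat.choose_self,
        Nat.cast_one, one_mul, mul_one]
      have h1 : (1 + e).choose e = e + 1 := by
        rw [add_comm]; exact Nat.choose_succ_self_right e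
      have h2 : (1 : ℕ) + e = e + 1 := by omega
      rw [h1, h2]
      push_cast
      ring
    obtain ⟨z, hz⟩ := ih Δ hΔdeg hΔint
    refine ⟨z, ?_⟩
    rw [hcoeff] at hz
    rw [Nat.factorial_succ]
    push_cast at hz ⊢
    linarith [hz]

lemma exists_repr : ∀ e : ℕ, ∀ g : Polynomial ℚ, (∀ k : ℕ, e ≤ k → g.coeff k = 0) →
    (∀ n : ℤ, ∃ z : ℤ, g.eval (n : ℚ) = (z : ℚ)) →
    ∃ m : Fin e → ℤ, g = ∑ i : Fin e, mterm (i : ℕ) (m i) := by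
  intro e
  induction e with
  | zero =>
    intro g hcoe hint
    have hg0 : g = 0 := Polynomial.ext fun n => by simpa using hcoe n (Nat.zero_le n)
    exact ⟨Fin.elim0, by simp [hg0]⟩
  | succ e ih =>
    intro g hcoe hint
    have hdeg : g.natDegree ≤ e := by
      rw [natDegree_le_iff_coeff_eq_zero]
      intro N hN
      exact hcoe N (by omega)
    obtain ⟨z, hz⟩ := key_int e g hdeg hint
    have hfac : (e.factorial : ℚ) ≠ 0 := by positivity
    set g' : Polynomial ℚ := g - mterm e z with hg'
    have hcoe' : ∀ k : ℕ, e ≤ k → g'.coeff k = 0 := by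
      intro k hk
      rw [hg', coeff_sub, mterm_coeff z hk]
      rcases eq_or_lt_of_le hk with h | h
      · subst h
        rw [if_pos rfl]
        have he : g.coeff e = (z : ℚ) / (e.factorial : ℚ) := by
          rw [eq_div_iff hfac]; exact hz
        rw [he, div_eq_mul_inv, sub_self]
      · rw [if_neg (by omega), hcoe k (by omega), sub_zero]
    have hint' : ∀ n : ℤ, ∃ w : ℤ, g'.eval (n : ℚ) = (w : ℚ) := by
      intro n
      obtain ⟨z1, hz1⟩ := hint n
      obtain ⟨z2, hz2⟩ := mterm_intval e z n
      refine ⟨z1 - z2, ?_⟩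
      rw [hg', eval_sub, hz1, hz2]
      push_cast
      ring
    obtain ⟨m', hm'⟩ := ih g' hcoe' hint'
    refine ⟨Fin.snoc m' z, ?_⟩
    rw [Fin.sum_univ_castSucc]
    simp only [Fin.snoc_castSucc, Fin.snoc_last, Fin.coe_castSucc, Fin.val_last]
    rw [← hm', hg']
    ring

lemma repr_unique : ∀ e : ℕ, ∀ m m' : Fin e → ℤ,
    (∑ i : Fin e, mterm (i : ℕ) (m i)) = (∑ i : Fin e, mterm (i : ℕ) (m' i)) → m = m' := by
  intro e
  induction e with
  | zero => intro m m' _; funext i; exact i.elim0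
  | succ e ih =>
    intro m m' h
    rw [Fin.sum_univ_castSucc, Fin.sum_univ_castSucc] at h
    have hzero : ∀ (mm : Fin (e + 1) → ℤ),
        (∑ i : Fin e, mterm ((Fin.castSucc i : Fin (e+1)) : ℕ) (mm (Fin.castSucc i))).coeff e
          = 0 := by
      intro mm
      rw [finset_sum_coeff]
      refine Finset.sum_eq_zero fun i _ => ?_
      exact coeff_eq_zero_of_natDegree_lt
        (lt_of_le_of_lt (mterm_natDegree _ _) (by simpa using i.isLt))
    have hfac : (e.factorial : ℚ) ≠ 0 := by positivity
    have hlast : m (Fin.last e) = m' (Fin.last e) := by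
      have hc := congrArg (fun p => Polynomial.coeff p e) h
      simp only [coeff_add] at hc
      rw [hzero m, hzero m', zero_add, zero_add, Fin.val_last,
        mterm_coeff _ le_rfl, mterm_coeff _ le_rfl, if_pos rfl, if_pos rfl] at hc
      have h2 := mul_right_cancel₀ (inv_ne_zero hfac) hc
      exact_mod_cast h2
    rw [Fin.val_last, hlast] at h
    have hsum : (∑ i : Fin e, mterm ((Fin.castSucc i : Fin (e+1)) : ℕ) (m (Fin.castSucc i)))
        = ∑ i : Fin e, mterm ((Fin.castSucc i : Fin (e+1)) : ℕ) (m' (Fin.castSucc i)) :=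
      add_right_cancel h
    have htail := ih (fun i => m (Fin.castSucc i)) (fun i => m' (Fin.castSucc i))
      (by simpa using hsum)
    funext i
    induction i using Fin.lastCases with
    | last => exact hlast
    | cast j => exact congrFun htail j

theorem sign_patterns_stmt10 (f : Polynomial ℚ) (d : ℕ) (hf : f ≠ 0)
    (hdeg : f.natDegree = d) (hint : ∀ n : ℤ, ∃ z : ℤ, f.eval (n : ℚ) = (z : ℚ)) :
    ∃! m : Fin (d + 1) → ℤ,
      f = ∑ i : Fin (d + 1),
        ((binomPoly ((i : ℕ) + 1)).comp (Polynomial.X + Polynomial.C ((i : ℕ) : ℚ))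
          - (binomPoly ((i : ℕ) + 1)).comp
              (Polynomial.X + Polynomial.C ((i : ℕ) : ℚ) - Polynomial.C ((m i : ℚ)))) := by
  subst hdeg
  obtain ⟨m, hm⟩ := exists_repr (f.natDegree + 1) f
    (fun k hk => coeff_eq_zero_of_natDegree_lt (by omega)) hint
  exact ⟨m, hm, fun y hy => repr_unique _ y m (hy.symm.trans hm)⟩
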